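/- Let a > 0 and k a nonnegative integer. The k-th ECH capacity of the ball B(a) is c_k(B(a)) = a·d, where d is the unique nonnegative integer with (d² + d)/2 ≤ k ≤ (d² + 3d)/2. In particular, for every nonnegative integer k there exists a unique such d. -/

import Mathlib

lemma two_mul_sum_range (n : ℕ) : 2 * ∑ s ∈ Finset.range n, (s+1) = n * (n+1) := by
  induction n with
  | zero => simp
  | succ n ih =>
    rw [Finset.sum_range_succ]
    have : (n+1)*(n+1+1) = n*(n+1) + 2*(n+1) := by ring
    omega

lemma card_tri (D : ℕ) :
    2 * Nat.card {p : ℕ × ℕ | p.1 + p.2 ≤ D} = (D+1)*(D+2) := by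
  have hset : {p : ℕ × ℕ | p.1 + p.2 ≤ D} =
      ↑((Finset.range (D+1)).biUnion (fun s => Finset.HasAntidiagonal.antidiagonal s)) := by
    ext p
    simp only [Set.mem_setOf_eq, Finset.coe_biUnion, Finset.mem_coe, Finset.mem_range,
      Set.mem_iUnion, Finset.HasAntidiagonal.mem_antidiagonal, Nat.lt_succ_iff]
    constructor
    · intro h; exact ⟨p.1+p.2, h, rfl⟩
    · rintro ⟨s, hs, rfl⟩; exact hs
  rw [hset, Nat.card_coe_set_eq, Set.ncard_coe_finset, Finset.card_biUnion]
  · simp only [Finset.Nat.card_antidiagonal]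
    exact two_mul_sum_range (D+1)
  · intro x _ y _ hxy
    simp only [Finset.disjoint_left, Finset.HasAntidiagonal.mem_antidiagonal]
    intro p hp hq
    exact hxy (hp ▸ hq.symm ▸ rfl)

lemma exists_d (k : ℕ) : ∃ d : ℕ, d^2 + d ≤ 2*k ∧ 2*k ≤ d^2 + 3*d := by
  induction k with
  | zero => exact ⟨0, by omega, by omega⟩
  | succ k ih =>
    obtain ⟨d, h1, h2⟩ := ih
    by_cases h : 2*(k+1) ≤ d^2 + 3*d
    · exact ⟨d, by omega, h⟩
    · have hev : Even (d^2 + 3*d) := by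
        have he := Nat.even_mul_succ_self d
        have : d^2+3*d = d*(d+1) + 2*d := by ring
        rw [this]
        exact he.add (even_two_mul d)
      obtain ⟨m, hm⟩ := hev
      have e1 : (d+1)^2 + (d+1) = d^2 + 3*d + 2 := by ring
      have e2 : (d+1)^2 + 3*(d+1) = d^2 + 5*d + 4 := by ring
      exact ⟨d+1, by omega, by omega⟩

lemma uniq_d {k d d' : ℕ} (h1 : d^2 + d ≤ 2*k) (h2 : 2*k ≤ d^2 + 3*d)
    (h1' : d'^2 + d' ≤ 2*k) (h2' : 2*k ≤ d'^2 + 3*d') : d = d' := by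
  rcases lt_trichotomy d d' with h | h | h
  · exfalso
    have hle : d + 1 ≤ d' := h
    have : (d+1)^2 + (d+1) ≤ d'^2 + d' := by nlinarith
    have e1 : (d+1)^2 + (d+1) = d^2 + 3*d + 2 := by ring
    omega
  · exact h
  · exfalso
    have hle : d' + 1 ≤ d := h
    have : (d'+1)^2 + (d'+1) ≤ d^2 + d := by nlinarith
    have e1 : (d'+1)^2 + (d'+1) = d'^2 + 3*d' + 2 := by ring
    omega

lemma cast_d {k d : ℕ} (h1 : ((d:ℝ)^2 + d) / 2 ≤ k) (h2 : (k : ℝ) ≤ ((d:ℝ)^2 + 3 * d) / 2) :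
    d^2 + d ≤ 2*k ∧ 2*k ≤ d^2 + 3*d := by
  constructor
  · have : ((d^2 + d : ℕ) : ℝ) ≤ ((2*k : ℕ) : ℝ) := by push_cast; linarith
    exact_mod_cast this
  · have : ((2*k : ℕ) : ℝ) ≤ ((d^2 + 3*d : ℕ) : ℝ) := by push_cast; linarith
    exact_mod_cast this

lemma cast_d' {k d : ℕ} (h1 : d^2 + d ≤ 2*k) (h2 : 2*k ≤ d^2 + 3*d) :
    ((d:ℝ)^2 + d) / 2 ≤ k ∧ (k : ℝ) ≤ ((d:ℝ)^2 + 3 * d) / 2 := by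
  constructor
  · have : ((d^2 + d : ℕ) : ℝ) ≤ ((2*k : ℕ) : ℝ) := by exact_mod_cast h1
    push_cast at this; linarith
  · have : ((2*k : ℕ) : ℝ) ≤ ((d^2 + 3*d : ℕ) : ℝ) := by exact_mod_cast h2
    push_cast at this; linarith

/-- The k-th term (starting at k = 0) of the sequence N(a,b): all values
`m*a + n*b` for nonnegative integers `m, n`, arranged in nondecreasing order
(with multiplicity).  It equals the least `t ≥ 0` such that at least `k+1`
pairs `(m,n)` satisfy `m*a + n*b ≤ t`. -/
noncomputable def Nseq (a b : ℝ) (k : ℕ) : ℝ :=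
  sInf {t : ℝ | 0 ≤ t ∧
    k + 1 ≤ Nat.card {p : ℕ × ℕ | (p.1 : ℝ) * a + (p.2 : ℝ) * b ≤ t}}

/-- The k-th ECH capacity of the ball `B(a) = E(a,a)`. -/
noncomputable def echBall (a : ℝ) (k : ℕ) : ℝ := Nseq a a k

lemma key {a : ℝ} (ha : 0 < a) {k d : ℕ} (h1 : d^2 + d ≤ 2*k) (h2 : 2*k ≤ d^2 + 3*d) :
    echBall a k = a * d := by
  have hsetD : ∀ t : ℝ, 0 ≤ t →
      {p : ℕ × ℕ | (p.1 : ℝ) * a + (p.2 : ℝ) * a ≤ t}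
        = {p : ℕ × ℕ | p.1 + p.2 ≤ ⌊t/a⌋₊} := by
    intro t ht
    ext ⟨m, n⟩
    simp only [Set.mem_setOf_eq]
    rw [Nat.le_floor_iff (div_nonneg ht ha.le), le_div_iff₀ ha]
    push_cast
    constructor <;> intro h <;> linarith
  have hS : {t : ℝ | 0 ≤ t ∧
      k + 1 ≤ Nat.card {p : ℕ × ℕ | (p.1 : ℝ) * a + (p.2 : ℝ) * a ≤ t}}
      = Set.Ici (a * d) := by
    ext t
    simp only [Set.mem_setOf_eq, Set.mem_Ici]
    constructor
    · rintro ⟨ht, hc⟩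
      rw [hsetD t ht] at hc
      set D := ⌊t/a⌋₊ with hD
      have hcard := card_tri D
      have h2c : 2*(k+1) ≤ (D+1)*(D+2) := by omega
      by_contra hlt
      push_neg at hlt
      have hDd : D + 1 ≤ d := by
        by_contra hc2
        push_neg at hc2
        have : (d : ℝ) ≤ D := by exact_mod_cast Nat.lt_succ_iff.mp hc2
        have hfl : (D : ℝ) ≤ t / a := Nat.floor_le (div_nonneg ht ha.le)
        have : (d : ℝ) * a ≤ t := by
          rw [← le_div_iff₀ ha]; linarith
        linarith [this, mul_comm a (d:ℝ) ▸ hlt]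
      have hmono : (D+1)*(D+2) ≤ d*(d+1) := Nat.mul_le_mul hDd (by omega)
      have : d*(d+1) = d^2 + d := by ring
      omega
    · intro ht
      have ht0 : 0 ≤ t := le_trans (by positivity) ht
      refine ⟨ht0, ?_⟩
      rw [hsetD t ht0]
      set D := ⌊t/a⌋₊ with hD
      have hcard := card_tri D
      have hdD : d ≤ D := by
        rw [hD]
        rw [Nat.le_floor_iff (div_nonneg ht0 ha.le), le_div_iff₀ ha]
        linarith [mul_comm (d:ℝ) a ▸ ht]
      have hmono : (d+1)*(d+2) ≤ (D+1)*(D+2) := Nat.mul_le_mul (by omega) (by omega)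
      have : (d+1)*(d+2) = d^2 + 3*d + 2 := by ring
      omega
  rw [echBall, Nseq, hS]
  exact csInf_Ici

theorem ech_capacity_ball (a : ℝ) (ha : 0 < a) (k : ℕ) :
    (∃! d : ℕ, ((d:ℝ)^2 + d) / 2 ≤ k ∧ (k : ℝ) ≤ ((d:ℝ)^2 + 3 * d) / 2) ∧
    ∀ d : ℕ, ((d:ℝ)^2 + d) / 2 ≤ k → (k : ℝ) ≤ ((d:ℝ)^2 + 3 * d) / 2 →
      echBall a k = a * d := by
  obtain ⟨d, hd1, hd2⟩ := exists_d k
  constructor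
  · refine ⟨d, cast_d' hd1 hd2, ?_⟩
    intro d' ⟨h1', h2'⟩
    obtain ⟨g1, g2⟩ := cast_d h1' h2'
    exact uniq_d g1 g2 hd1 hd2
  · intro d' h1' h2'
    obtain ⟨g1, g2⟩ := cast_d h1' h2'
    exact key ha g1 g2
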